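/- Let K be a field, t ≥ 1, and μ₁, ..., μ_r ∈ ℕ^t pairwise linearly independent over ℚ with {μ₁,...,μ_s} a minimal generating set of their convex cone. Let C° be the convex cone spanned by μ₂, ..., μ_r and let A be the subring of K[[z₁,...,z_t]] consisting of series whose support is contained in Γ + C° for some finite Γ ⊂ ℕ^t (i.e., A = K[[z^{μ₂},...,z^{μ_r}]][z₁,...,z_t]). If g₁(z), ..., g_m(z) ∈ K[[z]] are linearly independent over K(z) (one variable), then the multivariate power series g₁(z^{μ₁}), ..., g_m(z^{μ₁}) are linearly independent over A. -/

import Mathlib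

open Finset

/-- dot product on `Fin t → ℝ`. -/
def dotR {t : ℕ} (w x : Fin t → ℝ) : ℝ := ∑ k, w k * x k

lemma dotR_add {t : ℕ} (w x y : Fin t → ℝ) : dotR w (x + y) = dotR w x + dotR w y := by
  simp [dotR, mul_add, Finset.sum_add_distrib]

lemma dotR_smul {t : ℕ} (w : Fin t → ℝ) (c : ℝ) (x : Fin t → ℝ) :
    dotR w (c • x) = c * dotR w x := by
  simp [dotR, Finset.mul_sum, mul_comm, mul_assoc, mul_left_comm]

lemma dotR_sub_left {t : ℕ} (w w' x : Fin t → ℝ) : dotR (w - w') x = dotR w x - dotR w' x := by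
  simp [dotR, sub_mul, Finset.sum_sub_distrib]

lemma dotR_smul_left {t : ℕ} (c : ℝ) (w x : Fin t → ℝ) : dotR (c • w) x = c * dotR w x := by
  simp [dotR, Finset.mul_sum, mul_comm, mul_assoc, mul_left_comm]

lemma dotR_sub {t : ℕ} (w x y : Fin t → ℝ) : dotR w (x - y) = dotR w x - dotR w y := by
  simp [dotR, mul_sub, Finset.sum_sub_distrib]

lemma dotR_self_pos {t : ℕ} {x : Fin t → ℝ} (hx : x ≠ 0) : 0 < dotR x x := by
  have : ∃ k, x k ≠ 0 := by
    by_contra hc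
    push_neg at hc
    exact hx (funext hc)
  obtain ⟨k, hk⟩ := this
  exact Finset.sum_pos' (fun i _ => mul_self_nonneg _) ⟨k, Finset.mem_univ k, mul_self_pos.2 hk⟩

lemma dotR_sum {t : ℕ} {ι : Type*} (w : Fin t → ℝ) (s : Finset ι) (f : ι → Fin t → ℝ) :
    dotR w (∑ i ∈ s, f i) = ∑ i ∈ s, dotR w (f i) := by
  classical
  induction s using Finset.induction with
  | empty => simp [dotR]
  | insert a s' hni ih => rw [Finset.sum_insert hni, dotR_add, ih, Finset.sum_insert hni]

/-- cone generated by a list of vectors. -/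
def coneL {t : ℕ} : List (Fin t → ℝ) → Set (Fin t → ℝ)
  | [] => {0}
  | v :: l => {x | ∃ a : ℝ, 0 ≤ a ∧ ∃ y ∈ coneL l, x = a • v + y}

lemma coneL_map_add {t : ℕ} (v' : Fin t → ℝ) (f : (Fin t → ℝ) → (Fin t → ℝ)) :
    ∀ (l : List (Fin t → ℝ)), (∀ u ∈ l, ∃ c : ℝ, 0 ≤ c ∧ f u = u + c • v') →
      ∀ x ∈ coneL (l.map f), ∃ y ∈ coneL l, ∃ d : ℝ, 0 ≤ d ∧ x = y + d • v'
  | [], _, x, hx => ⟨0, rfl, 0, le_refl _, by simpa [coneL] using hx⟩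
  | u :: l, hl, x, hx => by
    obtain ⟨a, ha, y', hy', hxy⟩ := hx
    obtain ⟨y, hy, d', hd', hy'e⟩ := coneL_map_add v' f l (fun u hu => hl u (by simp [hu])) y' hy'
    obtain ⟨c, hc, hfu⟩ := hl u (by simp)
    refine ⟨a • u + y, ⟨a, ha, y, hy, rfl⟩, a * c + d', by positivity, ?_⟩
    rw [hxy, hfu, hy'e]
    module

lemma coneL_zero_mem {t : ℕ} : ∀ (l : List (Fin t → ℝ)), (0 : Fin t → ℝ) ∈ coneL l
  | [] => rfl
  | v :: l => ⟨0, le_refl _, 0, coneL_zero_mem l, by simp⟩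

/-- Farkas lemma. -/
lemma farkas {t : ℕ} : ∀ (l : List (Fin t → ℝ)) (b : Fin t → ℝ), b ∉ coneL l →
    ∃ w : Fin t → ℝ, (∀ v ∈ l, dotR w v ≤ 0) ∧ 0 < dotR w b
  | [], b, hb => ⟨b, by simp, dotR_self_pos (by simpa [coneL] using hb)⟩
  | v' :: l, b, hb => by
    have hbl : b ∉ coneL l := fun hbl => hb ⟨0, le_refl _, b, hbl, by simp⟩
    obtain ⟨w, hwl, hwb⟩ := farkas l b hbl
    by_cases hv' : dotR w v' ≤ 0
    · exact ⟨w, fun v hv => by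
        rcases List.mem_cons.1 hv with h | h
        · exact h ▸ hv'
        · exact hwl v h, hwb⟩
    push_neg at hv'
    have hbtl : (b - (dotR w b / dotR w v') • v') ∉
        coneL (l.map (fun u => u - (dotR w u / dotR w v') • v')) := by
      intro hmem
      obtain ⟨y, hy, d, hd, hyd⟩ := coneL_map_add v' _ l (fun u hu => by
        refine ⟨-(dotR w u / dotR w v'), ?_, by module⟩
        have h1 := hwl u hu
        have h2 : dotR w u / dotR w v' ≤ 0 :=
          div_nonpos_of_nonpos_of_nonneg h1 (le_of_lt hv')
        linarith) _ hmem
      apply hb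
      refine ⟨d + dotR w b / dotR w v', by positivity, y, hy, ?_⟩
      linear_combination (norm := module) hyd
    obtain ⟨wt, hwtl, hwtb⟩ := farkas (l.map (fun u => u - (dotR w u / dotR w v') • v'))
      (b - (dotR w b / dotR w v') • v') hbtl
    refine ⟨wt - (dotR wt v' / dotR w v') • w, fun v hv => ?_, ?_⟩
    · rcases List.mem_cons.1 hv with h | h
      · subst h
        rw [dotR_sub_left, dotR_smul_left, div_mul_cancel₀ _ (ne_of_gt hv')]
        simp
      · have := hwtl _ (List.mem_map_of_mem h)
        simp only [dotR_sub, dotR_smul] at this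
        rw [dotR_sub_left, dotR_smul_left]
        calc dotR wt v - dotR wt v' / dotR w v' * dotR w v
            = dotR wt v - dotR w v / dotR w v' * dotR wt v' := by ring
          _ ≤ 0 := this
    · rw [dotR_sub_left, dotR_smul_left]
      calc (0:ℝ) < dotR wt (b - (dotR w b / dotR w v') • v') := hwtb
        _ = dotR wt b - dotR w b / dotR w v' * dotR wt v' := by rw [dotR_sub, dotR_smul]
        _ = dotR wt b - dotR wt v' / dotR w v' * dotR w b := by ring
  termination_by l => l.length
  decreasing_by
  · simp
  · simp


/-- The natural inclusion of `ℕ^t` into `ℝ^t`. -/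
def toR {t : ℕ} (x : Fin t → ℕ) : Fin t → ℝ := fun i => (x i : ℝ)

/-- The natural inclusion of `ℕ^t` into `ℚ^t`. -/
def toQ {t : ℕ} (x : Fin t → ℕ) : Fin t → ℚ := fun i => (x i : ℚ)

/-- The convex cone spanned by the vectors `μ i`, `i ∈ I`. -/
def coneOf {t r : ℕ} (μ : Fin r → Fin t → ℕ) (I : Set (Fin r)) : Set (Fin t → ℝ) :=
  {x | ∃ a : Fin r → ℝ, (∀ i, 0 ≤ a i) ∧ (∀ i, i ∉ I → a i = 0) ∧ x = ∑ i, a i • toR (μ i)}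

/-- Pairwise linear independence over `ℚ`. -/
def PairwiseQIndep {t r : ℕ} (μ : Fin r → Fin t → ℕ) : Prop :=
  ∀ i j, i ≠ j → ∀ a b : ℚ, a • toQ (μ i) + b • toQ (μ j) = 0 → a = 0 ∧ b = 0

/-- `{μ 0, ..., μ (s-1)}` is a minimal generating set of the cone spanned by all the `μ i`. -/
def IsMinimalBasis {t r : ℕ} (μ : Fin r → Fin t → ℕ) (s : ℕ) : Prop :=
  coneOf μ {i | (i : ℕ) < s} = coneOf μ Set.univ ∧
    ∀ I : Set (Fin r), I ⊂ {i | (i : ℕ) < s} → coneOf μ I ≠ coneOf μ Set.univ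

open Classical in
/-- The monomial substitution `g(z) ↦ g(z^μ)`: the multivariate power series
`∑ a_n z^{nμ}` associated with `g = ∑ a_n z^n`. -/
noncomputable def subMon {K : Type*} [Field K] {t : ℕ} (μ : Fin t → ℕ)
    (g : PowerSeries K) : MvPowerSeries (Fin t) K :=
  fun d => if h : ∃ n : ℕ, (d : Fin t → ℕ) = n • μ then PowerSeries.coeff h.choose g else 0

/-- Membership in the ring `A = K[[z^{μ₂},...,z^{μ_r}]][z₁,...,z_t]`: the support of the
series is contained in `Γ + C°` for some finite set `Γ ⊂ ℕ^t`, where `C°` is the convex cone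
spanned by `μ₂, ..., μ_r`. -/
def memA {K : Type*} [Field K] {t r : ℕ} (hr : 1 ≤ r) (μ : Fin r → Fin t → ℕ)
    (h : MvPowerSeries (Fin t) K) : Prop :=
  ∃ Γ : Finset (Fin t → ℕ), ∀ d : Fin t →₀ ℕ, MvPowerSeries.coeff d h ≠ 0 →
    ∃ γ ∈ Γ, ∃ c ∈ coneOf μ {i | i ≠ ⟨0, hr⟩}, toR (⇑d) = toR γ + c


section coneOf
variable {t r : ℕ} {μ : Fin r → Fin t → ℕ} {I J : Set (Fin r)}

lemma coneOf_zero_mem : (0 : Fin t → ℝ) ∈ coneOf μ I :=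
  ⟨0, fun _ => le_refl _, fun _ _ => rfl, by simp⟩

lemma coneOf_add_mem {x y : Fin t → ℝ} (hx : x ∈ coneOf μ I) (hy : y ∈ coneOf μ I) :
    x + y ∈ coneOf μ I := by
  obtain ⟨a, ha, ha', hxe⟩ := hx
  obtain ⟨b, hb, hb', hye⟩ := hy
  refine ⟨a + b, fun i => add_nonneg (ha i) (hb i),
    fun i hi => by simp [ha' i hi, hb' i hi], ?_⟩
  rw [hxe, hye, ← Finset.sum_add_distrib]
  congr 1; funext i; simp [add_smul]

lemma coneOf_smul_mem {c : ℝ} (hc : 0 ≤ c) {x : Fin t → ℝ} (hx : x ∈ coneOf μ I) :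
    c • x ∈ coneOf μ I := by
  obtain ⟨a, ha, ha', hxe⟩ := hx
  refine ⟨fun i => c * a i, fun i => mul_nonneg hc (ha i),
    fun i hi => by simp [ha' i hi], ?_⟩
  rw [hxe, Finset.smul_sum]
  congr 1; funext i; rw [smul_smul]

lemma coneOf_gen_mem {i : Fin r} (hi : i ∈ I) : toR (μ i) ∈ coneOf μ I := by
  classical
  refine ⟨fun j => if j = i then 1 else 0, fun j => by positivity,
    fun j hj => if h : j = i then absurd (h ▸ hi) hj else if_neg h, ?_⟩
  rw [Finset.sum_eq_single i (fun j _ hj => by simp [hj]) (by simp)]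
  simp

lemma coneOf_mono (hIJ : I ⊆ J) : coneOf μ I ⊆ coneOf μ J :=
  fun x ⟨a, ha, ha', hx⟩ => ⟨a, ha, fun i hi => ha' i (fun h => hi (hIJ h)), hx⟩

lemma coneOf_subset_of_gens (h : ∀ i ∈ J, toR (μ i) ∈ coneOf μ I) :
    coneOf μ J ⊆ coneOf μ I := by
  rintro x ⟨a, ha, ha', hx⟩
  rw [hx]
  apply Finset.sum_induction _ (· ∈ coneOf μ I) (fun _ _ => coneOf_add_mem) coneOf_zero_mem
  intro i _
  by_cases hi : i ∈ J
  · exact coneOf_smul_mem (ha i) (h i hi)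
  · rw [ha' i hi, zero_smul]; exact coneOf_zero_mem

lemma coneOf_nonneg {x : Fin t → ℝ} (hx : x ∈ coneOf μ I) (k : Fin t) : 0 ≤ x k := by
  obtain ⟨a, ha, _, hxe⟩ := hx
  rw [hxe, Finset.sum_apply]
  exact Finset.sum_nonneg fun i _ => by
    have : (0:ℝ) ≤ (μ i k : ℝ) := Nat.cast_nonneg _
    simpa [toR] using mul_nonneg (ha i) this

end coneOf

/-- μ₀ is not in the cone generated by the other μ's. -/
lemma mu0_not_mem_cone {t r : ℕ} (hr : 1 ≤ r) (μ : Fin r → Fin t → ℕ)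
    (hindep : PairwiseQIndep μ) (s : ℕ) (hs1 : 1 ≤ s) (hbasis : IsMinimalBasis μ s) :
    toR (μ ⟨0, hr⟩) ∉ coneOf μ {i | i ≠ ⟨0, hr⟩} := by
  classical
  set i0 : Fin r := ⟨0, hr⟩ with hi0
  intro H
  obtain ⟨b, hb, hb0, hbe⟩ := H
  -- for each i, a representation of μ i over {j | j < s}
  have hrep : ∀ i : Fin r, ∃ c : Fin r → ℝ, (∀ j, 0 ≤ c j) ∧ (∀ j : Fin r, ¬ ((j:ℕ) < s) → c j = 0) ∧
      toR (μ i) = ∑ j, c j • toR (μ j) ∧ ((i:ℕ) < s → ∀ j, j ≠ i → c j = 0) := by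
    intro i
    by_cases hi : (i:ℕ) < s
    · refine ⟨fun j => if j = i then 1 else 0, fun j => by positivity,
        fun j hj => if h : j = i then absurd (h ▸ hi) hj else if_neg h, ?_,
        fun _ j hj => if_neg hj⟩
      rw [Finset.sum_eq_single i (fun j _ hj => by simp [hj]) (by simp)]
      simp
    · have : toR (μ i) ∈ coneOf μ {j | (j:ℕ) < s} := by
        rw [hbasis.1]
        exact coneOf_gen_mem (Set.mem_univ i)
      obtain ⟨c, hc, hc', hce⟩ := this
      exact ⟨c, hc, hc', hce, fun h => absurd h hi⟩
  choose c hc hcs hce hcind using hrep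
  -- the set I
  set I : Set (Fin r) := {j | (j:ℕ) < s} \ {i0} with hI
  have hIsub : I ⊂ {j | (j:ℕ) < s} := by
    constructor
    · exact Set.diff_subset
    · intro hsub
      have : i0 ∈ I := hsub (by simp [hi0]; omega)
      simp [hI] at this
  -- T and u
  set T : ℝ := ∑ i, b i * c i i0 with hT
  have hTnn : 0 ≤ T := Finset.sum_nonneg fun i _ => mul_nonneg (hb i) (hc i i0)
  -- μ₀ = T • μ₀ + u with u ∈ coneOf μ I
  set d : Fin r → ℝ := fun j => if j = i0 then 0 else ∑ i, b i * c i j with hd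
  have hdnn : ∀ j, 0 ≤ d j := by
    intro j
    by_cases hj : j = i0
    · simp [hd, hj]
    · simp only [hd, if_neg hj]
      exact Finset.sum_nonneg fun i _ => mul_nonneg (hb i) (hc i j)
  set u : Fin t → ℝ := ∑ j, d j • toR (μ j) with hu
  have huI : u ∈ coneOf μ I := by
    refine ⟨d, hdnn, fun j hj => ?_, rfl⟩
    by_cases hji : j = i0
    · simp [hd, hji]
    · have : ¬ ((j:ℕ) < s) := by
        intro hjs
        exact hj ⟨hjs, hji⟩
      simp only [hd, if_neg hji]
      exact Finset.sum_eq_zero fun i _ => by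
        by_cases his : (i:ℕ) < s
        · rcases eq_or_ne j i with h | h
          · subst h; exact absurd his this
          · rw [hcind i his j h, mul_zero]
        · rw [hcs i j this, mul_zero]
    -- done
  have hkey : toR (μ i0) = T • toR (μ i0) + u := by
    calc toR (μ i0) = ∑ i, b i • toR (μ i) := hbe
      _ = ∑ i, b i • (∑ j, c i j • toR (μ j)) := by
          refine Finset.sum_congr rfl fun i _ => by rw [hce i]
      _ = ∑ i, ∑ j, (b i * c i j) • toR (μ j) := by
          refine Finset.sum_congr rfl fun i _ => by
            rw [Finset.smul_sum]
            exact Finset.sum_congr rfl fun j _ => by rw [smul_smul]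
      _ = ∑ j, (∑ i, b i * c i j) • toR (μ j) := by
          rw [Finset.sum_comm]
          exact Finset.sum_congr rfl fun j _ => by rw [Finset.sum_smul]
      _ = (∑ i, b i * c i i0) • toR (μ i0) + ∑ j ∈ univ.erase i0, (∑ i, b i * c i j) • toR (μ j) := by
          rw [← Finset.add_sum_erase _ _ (Finset.mem_univ i0)]
      _ = T • toR (μ i0) + u := by
          congr 1
          rw [hu, ← Finset.add_sum_erase _ (fun j => d j • toR (μ j)) (Finset.mem_univ i0)]
          simp only [hd, if_pos rfl, zero_smul, zero_add]
          exact Finset.sum_congr rfl fun j hj => by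
            rw [if_neg (Finset.ne_of_mem_erase hj)]
  -- case T < 1 : contradiction with minimality
  by_cases hT1 : T < 1
  · have hmu0 : toR (μ i0) ∈ coneOf μ I := by
      have h1 : (1 - T)⁻¹ • ((1 - T) • toR (μ i0)) = toR (μ i0) := by
        rw [smul_smul, inv_mul_cancel₀ (by linarith), one_smul]
      have h2 : (1 - T) • toR (μ i0) = u := by
        linear_combination (norm := module) hkey
      rw [← h1, h2]
      exact coneOf_smul_mem (inv_nonneg.2 (by linarith)) huI
    apply hbasis.2 I hIsub
    apply le_antisymm
    · exact coneOf_mono (fun _ _ => Set.mem_univ _)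
    · rw [← hbasis.1]
      apply coneOf_subset_of_gens
      intro i hi
      rcases eq_or_ne i i0 with h | h
      · exact h ▸ hmu0
      · exact coneOf_gen_mem ⟨hi, h⟩
  -- case T ≥ 1
  push_neg at hT1
  -- (T-1) • μ₀ + u = 0 componentwise nonneg ⇒ u = 0 componentwise and (T-1)μ₀ = 0
  have hzero : (T - 1) • toR (μ i0) + u = 0 := by
    linear_combination (norm := module) -hkey
  have hunn : ∀ k, 0 ≤ u k := coneOf_nonneg huI
  have hmnn : ∀ k, 0 ≤ ((T - 1) • toR (μ i0)) k := by
    intro k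
    have : (0:ℝ) ≤ (μ i0 k : ℝ) := Nat.cast_nonneg _
    simpa [toR] using mul_nonneg (by linarith : (0:ℝ) ≤ T - 1) this
  have hu0 : ∀ k, u k = 0 := by
    intro k
    have := congrFun hzero k
    simp only [Pi.add_apply, Pi.zero_apply] at this
    linarith [hunn k, hmnn k]
  -- each term of u vanishes: for every j ≠ i0, d j • toR (μ j) = 0
  have hterm : ∀ j, d j • toR (μ j) = 0 := by
    intro j
    have hsum : ∀ k, ∑ j, (d j • toR (μ j)) k = 0 := by
      intro k
      have := hu0 k
      rw [hu, Finset.sum_apply] at this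
      exact this
    funext k
    have h1 : ∀ j' ∈ (univ : Finset (Fin r)), 0 ≤ (d j' • toR (μ j')) k := by
      intro j' _
      have : (0:ℝ) ≤ (μ j' k : ℝ) := Nat.cast_nonneg _
      simpa [toR] using mul_nonneg (hdnn j') this
    have := (Finset.sum_eq_zero_iff_of_nonneg h1).1 (hsum k) j (Finset.mem_univ j)
    exact this
  -- T ≥ 1 > 0 gives i₁ with b i₁ * c i₁ i0 > 0
  have hex : ∃ i₁, 0 < b i₁ * c i₁ i0 := by
    by_contra hcon
    push_neg at hcon
    have : T ≤ 0 := Finset.sum_nonpos fun i _ => hcon i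
    linarith
  obtain ⟨i₁, hi₁⟩ := hex
  have hbi₁ : 0 < b i₁ := by
    rcases lt_or_ge 0 (b i₁) with h | h
    · exact h
    · nlinarith [hc i₁ i0]
  have hci₁ : 0 < c i₁ i0 := by nlinarith [hb i₁]
  have hi₁ne : i₁ ≠ i0 := fun h => by
    rw [h] at hbi₁
    rw [hb0 i0 (by simp [hi0])] at hbi₁
    exact lt_irrefl 0 hbi₁
  -- μ i₁ = c i₁ i0 • μ i0  (as real vectors)
  have hmui₁ : toR (μ i₁) = c i₁ i0 • toR (μ i0) := by
    rw [hce i₁, ← Finset.add_sum_erase _ _ (Finset.mem_univ i0)]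
    have : ∑ j ∈ univ.erase i0, c i₁ j • toR (μ j) = 0 := by
      apply Finset.sum_eq_zero
      intro j hj
      have hjne := Finset.ne_of_mem_erase hj
      -- c i₁ j • toR (μ j) = 0
      rcases smul_eq_zero.1 (hterm j) with h | h
      · -- d j = 0
        have hdj : d j = 0 := h
        rw [hd] at hdj
        simp only [if_neg hjne] at hdj
        have h1 : ∀ i' ∈ (univ : Finset (Fin r)), 0 ≤ b i' * c i' j :=
          fun i' _ => mul_nonneg (hb i') (hc i' j)
        have := (Finset.sum_eq_zero_iff_of_nonneg h1).1 hdj i₁ (Finset.mem_univ i₁)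
        have hcj : c i₁ j = 0 := by
          rcases mul_eq_zero.1 this with h' | h'
          · exact absurd h' (ne_of_gt hbi₁)
          · exact h'
        rw [hcj, zero_smul]
      · rw [h, smul_zero]
    rw [this, add_zero]
  -- derive contradiction with pairwise independence
  by_cases hmu0z : μ i0 = 0
  · -- μ i0 = 0 : then also μ i₁ = 0 and independence fails
    have hmu1z : μ i₁ = 0 := by
      funext k
      have hk := congrFun hmui₁ k
      rw [hmu0z] at hk
      simp only [toR, Pi.smul_apply, Pi.zero_apply, Nat.cast_zero, smul_eq_mul,
        mul_zero, Nat.cast_eq_zero] at hk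
      exact hk
    have := hindep i₁ i0 hi₁ne 1 1 (by
      funext k
      simp [toQ, hmu1z, hmu0z])
    exact one_ne_zero this.1
  · -- μ i0 ≠ 0 : pick a coordinate where it's positive; get rational proportionality
    have : ∃ k, μ i0 k ≠ 0 := by
      by_contra hcon
      push_neg at hcon
      exact hmu0z (funext hcon)
    obtain ⟨k₀, hk₀⟩ := this
    set q : ℚ := (μ i₁ k₀ : ℚ) / (μ i0 k₀ : ℚ) with hq
    have hrel : (1:ℚ) • toQ (μ i₁) + (-q) • toQ (μ i0) = 0 := by
      funext k
      have hk := congrFun hmui₁ k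
      have hkk := congrFun hmui₁ k₀
      simp only [toR, Pi.smul_apply, smul_eq_mul] at hk hkk
      have hne : ((μ i0 k₀ : ℝ)) ≠ 0 := Nat.cast_ne_zero.2 hk₀
      -- cross multiply: μ i₁ k * μ i0 k₀ = μ i₁ k₀ * μ i0 k  (over ℝ, hence over ℚ)
      have hcross : (μ i₁ k : ℝ) * (μ i0 k₀ : ℝ) = (μ i₁ k₀ : ℝ) * (μ i0 k : ℝ) := by
        nlinarith [hk, hkk]
      have hcrossn : μ i₁ k * μ i0 k₀ = μ i₁ k₀ * μ i0 k := by exact_mod_cast hcross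
      have hcrossq : (μ i₁ k : ℚ) * (μ i0 k₀ : ℚ) = (μ i₁ k₀ : ℚ) * (μ i0 k : ℚ) := by
        exact_mod_cast hcrossn
      simp only [Pi.add_apply, Pi.smul_apply, Pi.zero_apply, toQ, smul_eq_mul, one_mul]
      rw [hq]
      have hneq : ((μ i0 k₀ : ℚ)) ≠ 0 := Nat.cast_ne_zero.2 hk₀
      field_simp
      linarith [hcrossq]
    have := hindep i₁ i0 hi₁ne 1 (-q) hrel
    exact one_ne_zero this.1


section sep
variable {t r : ℕ}

lemma coneL_subset_coneOf {μ : Fin r → Fin t → ℕ} {I : Set (Fin r)} :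
    ∀ l : List (Fin t → ℝ), (∀ v ∈ l, v ∈ coneOf μ I) → coneL l ⊆ coneOf μ I
  | [], _ => fun x hx => by
      have : x = 0 := hx
      rw [this]; exact coneOf_zero_mem
  | v :: l, hl => by
    rintro x ⟨a, ha, y, hy, rfl⟩
    exact coneOf_add_mem (coneOf_smul_mem ha (hl v (by simp)))
      (coneL_subset_coneOf l (fun u hu => hl u (by simp [hu])) hy)

/-- the separating functional -/
lemma exists_sep (hr : 1 ≤ r) (μ : Fin r → Fin t → ℕ)
    (hindep : PairwiseQIndep μ) (s : ℕ) (hs1 : 1 ≤ s) (hbasis : IsMinimalBasis μ s) :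
    ∃ w : Fin t → ℝ, (∀ c ∈ coneOf μ {i | i ≠ ⟨0, hr⟩}, dotR w c ≤ 0) ∧
      0 < dotR w (toR (μ ⟨0, hr⟩)) := by
  classical
  set i0 : Fin r := ⟨0, hr⟩
  set l : List (Fin t → ℝ) :=
    ((List.finRange r).filter (· ≠ i0)).map (fun i => toR (μ i)) with hl
  have hmem : ∀ v ∈ l, v ∈ coneOf μ {i | i ≠ i0} := by
    intro v hv
    obtain ⟨i, hi, rfl⟩ := List.mem_map.1 hv
    exact coneOf_gen_mem (by simpa using (List.mem_filter.1 hi).2)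
  have hnot : toR (μ i0) ∉ coneL l := fun hc =>
    mu0_not_mem_cone hr μ hindep s hs1 hbasis (coneL_subset_coneOf l hmem hc)
  obtain ⟨w, hwl, hwb⟩ := farkas l (toR (μ i0)) hnot
  refine ⟨w, ?_, hwb⟩
  rintro c ⟨a, ha, ha', rfl⟩
  rw [dotR_sum]
  apply Finset.sum_nonpos
  intro i _
  rw [dotR_smul]
  by_cases hi : i = i0
  · rw [ha' i (by simp [hi]), zero_mul]
  · have hvi : toR (μ i) ∈ l := List.mem_map.2 ⟨i, List.mem_filter.2
      ⟨List.mem_finRange i, by simpa using hi⟩, rfl⟩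
    exact mul_nonpos_of_nonneg_of_nonpos (ha i) (hwl _ hvi)

end sep

theorem stmt8 {K : Type*} [Field K] {t r : ℕ} (ht : 1 ≤ t) (hr : 1 ≤ r)
    (μ : Fin r → Fin t → ℕ) (hindep : PairwiseQIndep μ)
    (s : ℕ) (hs1 : 1 ≤ s) (hsr : s ≤ r) (hbasis : IsMinimalBasis μ s)
    (m : ℕ) (g : Fin m → PowerSeries K)
    (hg : ∀ p : Fin m → Polynomial K, (∑ i, (p i : PowerSeries K) * g i) = 0 → ∀ i, p i = 0)
    (h : Fin m → MvPowerSeries (Fin t) K) (hA : ∀ i, memA hr μ (h i))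
    (hrel : (∑ i, h i * subMon (μ ⟨0, hr⟩) (g i)) = 0) :
    ∀ i, h i = 0 := by
  classical
  obtain ⟨w, hwC, hwv⟩ := exists_sep hr μ hindep s hs1 hbasis
  set i0 : Fin r := ⟨0, hr⟩ with hi0def
  set ν : Fin t → ℕ := μ i0 with hνdef
  set D : (Fin t → ℕ) → (Fin t →₀ ℕ) := fun x => Finsupp.equivFunOnFinite.symm x with hD
  have hDcoe : ∀ x : Fin t → ℕ, ⇑(D x) = x := fun x => rfl
  have hν : ν ≠ 0 := by
    intro hz
    rw [hz] at hwv
    have : toR (0 : Fin t → ℕ) = 0 := by funext k; simp [toR]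
    rw [this] at hwv
    simp [dotR] at hwv
  obtain ⟨k₀, hk₀⟩ : ∃ k, ν k ≠ 0 := by
    by_contra hc; push_neg at hc; exact hν (funext hc)
  -- evaluation of subMon
  have hsub_eval : ∀ (g' : PowerSeries K) (k : ℕ),
      MvPowerSeries.coeff (D (k • ν)) (subMon ν g') = PowerSeries.coeff k g' := by
    intro g' k
    rw [MvPowerSeries.coeff_apply]
    show (if h : ∃ n : ℕ, ⇑(D (k • ν)) = n • ν then PowerSeries.coeff h.choose g' else 0) = _
    have hex : ∃ n : ℕ, ⇑(D (k • ν)) = n • ν := ⟨k, hDcoe _⟩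
    rw [dif_pos hex]
    have hch := hex.choose_spec
    have h1 : k * ν k₀ = hex.choose * ν k₀ := congrFun hch k₀
    have h2 : hex.choose = k :=
      (Nat.eq_of_mul_eq_mul_right (Nat.pos_of_ne_zero hk₀) h1).symm
    rw [h2]
  have hsub_zero : ∀ (g' : PowerSeries K) (f : Fin t →₀ ℕ),
      (¬ ∃ k : ℕ, ⇑f = k • ν) → MvPowerSeries.coeff f (subMon ν g') = 0 := by
    intro g' f hf
    rw [MvPowerSeries.coeff_apply]
    exact dif_neg hf
  -- main part
  intro i
  ext d₀
  rw [map_zero]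
  -- construct δ and n₀
  set P : ℕ → Prop := fun j => ∀ k, j * ν k ≤ d₀ k with hP
  have hP0 : P 0 := fun k => by simp
  set n₀ : ℕ := Nat.findGreatest P (d₀ k₀) with hn₀
  have hPn₀ : P n₀ := Nat.findGreatest_spec (Nat.zero_le _) hP0
  have hmax : ¬ P (n₀ + 1) := by
    intro hcon
    by_cases hle : n₀ + 1 ≤ d₀ k₀
    · exact Nat.findGreatest_is_greatest (Nat.lt_succ_self n₀) hle hcon
    · push_neg at hle
      have h1 := hcon k₀
      have h2 : n₀ + 1 ≤ (n₀ + 1) * ν k₀ :=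
        Nat.le_mul_of_pos_right _ (Nat.pos_of_ne_zero hk₀)
      omega
  set δ : Fin t → ℕ := fun k => d₀ k - n₀ * ν k with hδdef
  have hδ : ∀ k, δ k + n₀ * ν k = d₀ k := fun k => Nat.sub_add_cancel (hPn₀ k)
  have hmin : ∀ n l : ℕ, (∀ k, l * ν k ≤ δ k + n * ν k) → l ≤ n := by
    intro n l hln
    by_contra hc
    push_neg at hc
    apply hmax
    intro k
    have h1 := hln k
    have h2 : (n + 1) * ν k ≤ l * ν k := Nat.mul_le_mul_right _ hc
    have h3 : ν k ≤ δ k := by nlinarith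
    calc (n₀ + 1) * ν k = n₀ * ν k + ν k := by ring
      _ ≤ n₀ * ν k + δ k := by omega
      _ = d₀ k := by rw [Nat.add_comm]; exact hδ k
  -- toR additivity fact
  have htoR : ∀ (x : Fin t → ℕ) (k : ℕ), toR (x + k • ν) = toR x + (k:ℝ) • toR ν := by
    intro x k
    funext j
    simp only [toR, Pi.add_apply, Pi.smul_apply, smul_eq_mul]
    push_cast
    ring
  -- finiteness: common bound N
  have hNi : ∀ i' : Fin m, ∃ Ni : ℕ, ∀ k : ℕ, Ni ≤ k →
      MvPowerSeries.coeff (D (δ + k • ν)) (h i') = 0 := by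
    intro i'
    obtain ⟨Γ, hΓ⟩ := hA i'
    refine ⟨⌈((∑ γ ∈ Γ, |dotR w (toR γ)|) + |dotR w (toR δ)|) / dotR w (toR ν)⌉₊ + 1,
      fun k hk => ?_⟩
    by_contra hne
    obtain ⟨γ, hγ, c, hc, heq⟩ := hΓ (D (δ + k • ν)) hne
    rw [hDcoe, htoR] at heq
    have hdot := congrArg (dotR w) heq
    rw [dotR_add, dotR_add, dotR_smul] at hdot
    have h1 : dotR w c ≤ 0 := hwC c hc
    have h2 : dotR w (toR γ) ≤ ∑ γ' ∈ Γ, |dotR w (toR γ')| :=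
      le_trans (le_abs_self _) (Finset.single_le_sum
        (f := fun γ' => |dotR w (toR γ')|) (fun γ' _ => abs_nonneg _) hγ)
    have h3 : (k:ℝ) * dotR w (toR ν) ≤
        (∑ γ' ∈ Γ, |dotR w (toR γ')|) + |dotR w (toR δ)| := by
      have := neg_abs_le (dotR w (toR δ))
      linarith
    have h4 : (k:ℝ) ≤ ((∑ γ' ∈ Γ, |dotR w (toR γ')|) + |dotR w (toR δ)|) / dotR w (toR ν) :=
      (le_div_iff₀ hwv).2 h3
    have h5 := Nat.le_ceil (((∑ γ' ∈ Γ, |dotR w (toR γ')|) + |dotR w (toR δ)|) / dotR w (toR ν))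
    have h6 : ((⌈((∑ γ' ∈ Γ, |dotR w (toR γ')|) + |dotR w (toR δ)|) / dotR w (toR ν)⌉₊ + 1 : ℕ) : ℝ)
        ≤ (k : ℝ) := by exact_mod_cast Nat.cast_le.2 hk
    push_cast at h6
    linarith
  choose Nf hNf using hNi
  set N : ℕ := Finset.univ.sup Nf with hN
  have hNbig : ∀ i' (k : ℕ), N ≤ k → MvPowerSeries.coeff (D (δ + k • ν)) (h i') = 0 :=
    fun i' k hk => hNf i' k (le_trans (Finset.le_sup (Finset.mem_univ i')) hk)
  -- polynomials
  set Pl : Fin m → Polynomial K := fun i' =>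
    ∑ k ∈ Finset.range N, Polynomial.C (MvPowerSeries.coeff (D (δ + k • ν)) (h i')) *
      Polynomial.X ^ k with hPl
  have hPlcoeff : ∀ i' (k : ℕ), (Pl i').coeff k =
      MvPowerSeries.coeff (D (δ + k • ν)) (h i') := by
    intro i' k
    rw [hPl]
    simp only [Polynomial.finset_sum_coeff, Polynomial.coeff_C_mul, Polynomial.coeff_X_pow,
      mul_ite, mul_one, mul_zero]
    rw [Finset.sum_ite_eq (Finset.range N) k
      (fun b => MvPowerSeries.coeff (D (δ + b • ν)) (h i'))]
    by_cases hk : k ∈ Finset.range N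
    · rw [if_pos hk]
    · rw [if_neg hk]
      exact (hNbig i' k (by simpa using hk)).symm
  -- the key identity
  have hkey : ∀ n : ℕ, ∀ i' : Fin m,
      (∑ p ∈ Finset.HasAntidiagonal.antidiagonal (D (δ + n • ν)),
        MvPowerSeries.coeff p.1 (h i') * MvPowerSeries.coeff p.2 (subMon ν (g i'))) =
      ∑ q ∈ Finset.HasAntidiagonal.antidiagonal n,
        MvPowerSeries.coeff (D (δ + q.1 • ν)) (h i') * PowerSeries.coeff q.2 (g i') := by
    intro n i'
    have hφmem : ∀ q ∈ Finset.HasAntidiagonal.antidiagonal n,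
        (D (δ + q.1 • ν), D (q.2 • ν)) ∈ Finset.HasAntidiagonal.antidiagonal (D (δ + n • ν)) := by
      intro q hq
      rw [Finset.HasAntidiagonal.mem_antidiagonal] at hq ⊢
      apply Finsupp.ext
      intro k
      rw [Finsupp.add_apply]
      show (δ + q.1 • ν) k + (q.2 • ν) k = (δ + n • ν) k
      simp only [Pi.add_apply, Pi.smul_apply, smul_eq_mul]
      rw [← hq, Nat.add_mul]
      ring
    have hinj : ∀ q ∈ Finset.HasAntidiagonal.antidiagonal n, ∀ q' ∈ Finset.HasAntidiagonal.antidiagonal n,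
        (D (δ + q.1 • ν), D (q.2 • ν)) = (D (δ + q'.1 • ν), D (q'.2 • ν)) → q = q' := by
      intro q hq q' hq' he
      have h2 : D (q.2 • ν) = D (q'.2 • ν) := congrArg Prod.snd he
      have h3 : q.2 * ν k₀ = q'.2 * ν k₀ := DFunLike.congr_fun h2 k₀
      have h22 : q.2 = q'.2 := Nat.eq_of_mul_eq_mul_right (Nat.pos_of_ne_zero hk₀) h3
      rw [Finset.HasAntidiagonal.mem_antidiagonal] at hq hq'
      exact Prod.ext (by omega) h22
    calc (∑ p ∈ Finset.HasAntidiagonal.antidiagonal (D (δ + n • ν)),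
          MvPowerSeries.coeff p.1 (h i') * MvPowerSeries.coeff p.2 (subMon ν (g i')))
        = ∑ p ∈ (Finset.HasAntidiagonal.antidiagonal n).image
            (fun q : ℕ × ℕ => (D (δ + q.1 • ν), D (q.2 • ν))),
            MvPowerSeries.coeff p.1 (h i') * MvPowerSeries.coeff p.2 (subMon ν (g i')) := by
          refine (Finset.sum_subset ?_ ?_).symm
          · intro p hp
            obtain ⟨q, hq, rfl⟩ := Finset.mem_image.1 hp
            exact hφmem q hq
          · intro p hp hpn
            by_cases hex : ∃ l : ℕ, ⇑p.2 = l • ν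
            · exfalso
              apply hpn
              obtain ⟨l, hl⟩ := hex
              rw [Finset.HasAntidiagonal.mem_antidiagonal] at hp
              have hx : ∀ k, p.1 k + p.2 k = (δ + n • ν) k := by
                intro k
                rw [← Finsupp.add_apply, hp]
                rfl
              have hle : ∀ k, l * ν k ≤ δ k + n * ν k := by
                intro k
                have hp2k : p.2 k = l * ν k := congrFun hl k
                have := hx k
                simp only [Pi.add_apply, Pi.smul_apply, smul_eq_mul] at this
                omega
              have hln : l ≤ n := hmin n l hle
              refine Finset.mem_image.2 ⟨(n - l, l), Finset.HasAntidiagonal.mem_antidiagonal.2 (by omega), ?_⟩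
              have hp2 : D (l • ν) = p.2 := by
                apply Finsupp.ext
                intro k
                exact (congrFun hl k).symm
              have hp1 : D (δ + (n - l) • ν) = p.1 := by
                apply Finsupp.ext
                intro k
                have hp2k : p.2 k = l * ν k := congrFun hl k
                have hxk := hx k
                simp only [Pi.add_apply, Pi.smul_apply, smul_eq_mul] at hxk
                show δ k + (n - l) * ν k = p.1 k
                rw [Nat.sub_mul]
                have hlmul : l * ν k ≤ n * ν k := Nat.mul_le_mul_right _ hln
                omega
              exact Prod.ext hp1 hp2
            · rw [hsub_zero (g i') p.2 hex, mul_zero]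
      _ = ∑ q ∈ Finset.HasAntidiagonal.antidiagonal n,
            MvPowerSeries.coeff (D (δ + q.1 • ν)) (h i') *
              MvPowerSeries.coeff (D (q.2 • ν)) (subMon ν (g i')) :=
          Finset.sum_image hinj
      _ = ∑ q ∈ Finset.HasAntidiagonal.antidiagonal n,
            MvPowerSeries.coeff (D (δ + q.1 • ν)) (h i') * PowerSeries.coeff q.2 (g i') :=
          Finset.sum_congr rfl fun q _ => by rw [hsub_eval]
  -- conclude ∑ Pl i * g i = 0
  have hPg : (∑ i', ((Pl i' : Polynomial K) : PowerSeries K) * g i') = 0 := by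
    apply PowerSeries.ext
    intro n
    rw [map_zero, map_sum]
    have h0 : MvPowerSeries.coeff (D (δ + n • ν)) (∑ i', h i' * subMon ν (g i')) = 0 := by
      rw [hrel]; exact map_zero _
    rw [map_sum] at h0
    calc ∑ i', PowerSeries.coeff n ((Pl i' : PowerSeries K) * g i')
        = ∑ i', ∑ q ∈ Finset.HasAntidiagonal.antidiagonal n,
            MvPowerSeries.coeff (D (δ + q.1 • ν)) (h i') * PowerSeries.coeff q.2 (g i') := by
          refine Finset.sum_congr rfl fun i' _ => ?_
          rw [PowerSeries.coeff_mul]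
          exact Finset.sum_congr rfl fun q _ => by
            rw [Polynomial.coeff_coe, hPlcoeff]
      _ = ∑ i', ∑ p ∈ Finset.HasAntidiagonal.antidiagonal (D (δ + n • ν)),
            MvPowerSeries.coeff p.1 (h i') * MvPowerSeries.coeff p.2 (subMon ν (g i')) := by
          exact Finset.sum_congr rfl fun i' _ => (hkey n i').symm
      _ = 0 := by
          rw [← h0]
          exact Finset.sum_congr rfl fun i' _ => (MvPowerSeries.coeff_mul _ _ _).symm
  have hPl0 := hg Pl hPg i
  -- conclude
  have : MvPowerSeries.coeff (D (δ + n₀ • ν)) (h i) = 0 := by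
    rw [← hPlcoeff i n₀, hPl0, Polynomial.coeff_zero]
  have hd₀ : D (δ + n₀ • ν) = d₀ := by
    apply Finsupp.ext
    intro k
    show (δ + n₀ • ν) k = d₀ k
    simp only [Pi.add_apply, Pi.smul_apply, smul_eq_mul]
    exact hδ k
  rw [hd₀] at this
  exact this
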